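/- The polynomial p(t) = t^3 - 7t^2 - 9t - 9 is irreducible over the rationals, has a real root τ > 1, and its other two roots are non-real complex conjugates whose product exceeds 1. In particular, τ is neither a Salem number nor a Pisot number. -/

import Mathlib

open Polynomial

/-- The polynomial `p(t) = t^3 - 7t^2 - 9t - 9` is irreducible over `ℚ`, has a real root
`τ > 1`, and its other two roots are non-real complex conjugates whose product exceeds `1`.
In particular `τ` is neither a Salem number nor a Pisot number. -/
theorem stmt_9 :
    Irreducible ((X : ℚ[X]) ^ 3 - 7 * X ^ 2 - 9 * X - 9) ∧
    ∃ τ : ℝ, 1 < τ ∧ aeval τ ((X : ℚ[X]) ^ 3 - 7 * X ^ 2 - 9 * X - 9) = 0 ∧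
      ∃ z : ℂ, z.im ≠ 0 ∧
        aeval z ((X : ℚ[X]) ^ 3 - 7 * X ^ 2 - 9 * X - 9) = 0 ∧
        aeval (starRingEnd ℂ z) ((X : ℚ[X]) ^ 3 - 7 * X ^ 2 - 9 * X - 9) = 0 ∧
        1 < ‖z * starRingEnd ℂ z‖ ∧
        (((X : ℚ[X]) ^ 3 - 7 * X ^ 2 - 9 * X - 9).map (algebraMap ℚ ℂ)).roots =
          {(τ : ℂ), z, starRingEnd ℂ z} := by
  constructor
  · -- Irreducibility
    have hd : ((X : ℚ[X]) ^ 3 - 7 * X ^ 2 - 9 * X - 9).natDegree = 3 := by compute_degree!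
    rw [irreducible_iff_roots_eq_zero_of_degree_le_three (by omega) (by omega)]
    rw [Multiset.eq_zero_iff_forall_notMem]
    intro q hq
    have hne : ((X : ℚ[X]) ^ 3 - 7 * X ^ 2 - 9 * X - 9) ≠ 0 := by
      intro h; rw [h] at hd; simp at hd
    rw [mem_roots hne] at hq
    have hq' : q ^ 3 - 7 * q ^ 2 - 9 * q - 9 = 0 := by
      simpa only [IsRoot.def, eval_sub, eval_mul, eval_pow, eval_X, eval_ofNat] using hq
    have hzm : ((X : ℤ[X]) ^ 3 - 7 * X ^ 2 - 9 * X - 9).Monic := by monicity!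
    have hz0 : aeval q ((X : ℤ[X]) ^ 3 - 7 * X ^ 2 - 9 * X - 9) = 0 := by
      simp only [map_sub, map_mul, map_pow, aeval_X, map_ofNat]; linear_combination hq'
    obtain ⟨m, rfl⟩ := isInteger_of_is_root_of_monic hzm hz0
    have hm : m ^ 3 - 7 * m ^ 2 - 9 * m - 9 = 0 := by
      rw [algebraMap_int_eq, eq_intCast] at hq'
      exact_mod_cast hq'
    have hdvd : m ∣ 9 := ⟨m ^ 2 - 7 * m - 9, by linear_combination -hm⟩
    have habs : |m| ≤ 9 := Int.le_of_dvd (by norm_num) ((abs_dvd _ _).mpr hdvd)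
    obtain ⟨hlo, hhi⟩ := abs_le.mp habs
    interval_cases m <;> norm_num at hm
  · -- roots
    have hc : ContinuousOn (fun x : ℝ => x^3 - 7*x^2 - 9*x - 9) (Set.Icc (41/5) 9) := by fun_prop
    obtain ⟨τ, hmem, hτ0⟩ :=
      intermediate_value_Icc (by norm_num : (41/5:ℝ) ≤ 9) hc
      (by constructor <;> norm_num :
        (0:ℝ) ∈ Set.Icc ((fun x:ℝ => x^3-7*x^2-9*x-9) (41/5)) ((fun x:ℝ => x^3-7*x^2-9*x-9) 9))
    simp only at hτ0
    have hτlo : 41/5 < τ := lt_of_le_of_ne hmem.1 (by rintro rfl; norm_num at hτ0)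
    have hτhi : τ < 9 := lt_of_le_of_ne hmem.2 (by rintro rfl; norm_num at hτ0)
    have hD : (0:ℝ) < 3*τ^2 - 14*τ - 85 := by nlinarith
    set b : ℝ := Real.sqrt (3*τ^2 - 14*τ - 85) with hbdef
    have hb : b * b = 3*τ^2 - 14*τ - 85 := Real.mul_self_sqrt hD.le
    have hbpos : 0 < b := Real.sqrt_pos.mpr hD
    refine ⟨τ, by linarith, ?_, ⟨(7-τ)/2, b/2⟩, by simpa using hbpos.ne', ?_⟩
    · simp only [map_sub, map_mul, map_pow, aeval_X, map_ofNat]; linear_combination hτ0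
    set z : ℂ := ⟨(7-τ)/2, b/2⟩ with hzdef
    have hconj : (starRingEnd ℂ) z = ⟨(7-τ)/2, -(b/2)⟩ := by
      apply Complex.ext <;> simp [hzdef]
    have h1 : (τ:ℂ) + z + (starRingEnd ℂ) z = 7 := by
      rw [hconj]; apply Complex.ext <;> simp [hzdef, Complex.add_re, Complex.add_im] <;> ring
    have h2 : (τ:ℂ)*z + (τ:ℂ)*((starRingEnd ℂ) z) + z*((starRingEnd ℂ) z) = -9 := by
      rw [hconj]; apply Complex.ext <;>
        simp [hzdef, Complex.mul_re, Complex.mul_im] <;> ring_nf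
      · linear_combination ((1:ℝ)/4) * hb
    have h3 : (τ:ℂ)*z*((starRingEnd ℂ) z) = 9 := by
      rw [hconj]; apply Complex.ext <;>
        simp [hzdef, Complex.mul_re, Complex.mul_im] <;> ring_nf
      · linear_combination (τ/4) * hb + hτ0
    have hprod : ∀ a c d : ℂ, (X - C a)*(X - C c)*(X - C d) =
        X^3 - C (a+c+d)*X^2 + C (a*c+a*d+c*d)*X - C (a*c*d) := by
      intro a c d; simp only [map_add, map_mul]; ring
    have hmap : (((X : ℚ[X]) ^ 3 - 7 * X ^ 2 - 9 * X - 9).map (algebraMap ℚ ℂ)) =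
        (X - C (τ:ℂ)) * (X - C z) * (X - C ((starRingEnd ℂ) z)) := by
      rw [hprod, h1, h2, h3]
      simp [Polynomial.map_ofNat, map_ofNat]
      ring
    have hz0 : aeval z ((X : ℚ[X]) ^ 3 - 7 * X ^ 2 - 9 * X - 9) = 0 := by
      rw [aeval_def, ← eval_map, hmap]
      simp [eval_mul]
    have hz0' : aeval ((starRingEnd ℂ) z) ((X : ℚ[X]) ^ 3 - 7 * X ^ 2 - 9 * X - 9) = 0 := by
      rw [aeval_def, ← eval_map, hmap]
      simp [eval_mul]
    refine ⟨hz0, hz0', ?_, ?_⟩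
    · rw [Complex.mul_conj, Complex.norm_real, Real.norm_eq_abs, abs_of_nonneg (Complex.normSq_nonneg z)]
      have hns : Complex.normSq z = τ^2 - 7*τ - 9 := by
        simp [Complex.normSq_apply, hzdef]; linear_combination (1/4:ℝ) * hb
      rw [hns]
      nlinarith
    · rw [hmap]
      have := roots_multiset_prod_X_sub_C ({(τ:ℂ), z, (starRingEnd ℂ) z} : Multiset ℂ)
      simpa [Multiset.map_cons, Multiset.prod_cons, mul_comm, mul_assoc, mul_left_comm] using this
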